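/- arXiv:0907.2892 — 7 statements merged into one kernel-verified Lean document; each statement's English description precedes it below -/
import Mathlib

section
/- Let Γ be a profinite group, let G and A be finite groups, let α : G → A and μ : Γ → A be surjective (continuous) homomorphisms, let I be a set, let G^I_A = {(g_i) ∈ G^I : α(g_i) = α(g_j) for all i, j ∈ I} be the fiber power with projections π_i : G^I_A → G, and let α_I : G^I_A → A be defined by α_I = α ∘ π_i (which is independent of the choice of i). If θ : Γ → G^I_A is a continuous surjective homomorphism with α_I ∘ θ = μ, then for every i ∈ I the homomorphism θ_i := π_i ∘ θ : Γ → G is surjective and satisfies α ∘ θ_i = μ, and for every finite subset I₀ ⊆ I the index formula [ker(μ) : ∩_{i∈I₀} ker(θ_i)] = ∏_{i∈I₀} [ker(μ) : ker(θ_i)] holds. -/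
/-- if `θ : Γ → G^I_A` is a continuous surjective solution of the embedding
problem `(μ, α_I)` onto the fiber power `G^I_A = {(g_i) : α (g_i) = α (g_j)}` (here realized
as a homomorphism `θ : Γ →* (I → G)` landing in, and onto, the fiber power), then each
`θ_i = π_i ∘ θ` is a solution of `(μ, α)`, and the family of kernels `ker θ_i` is
independent inside `ker μ`:
`[ker μ : ⋂_{i ∈ I₀} ker θ_i] = ∏_{i ∈ I₀} [ker μ : ker θ_i]` for every finite `I₀ ⊆ I`. -/
theorem fiberPower_solution_independent
    {Γ : Type*} [Group Γ] [TopologicalSpace Γ] [IsTopologicalGroup Γ]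
    [CompactSpace Γ] [TotallyDisconnectedSpace Γ]
    {G A : Type*} [Group G] [Group A] [Finite G] [Finite A]
    [TopologicalSpace G] [DiscreteTopology G]
    (α : G →* A) (μ : Γ →* A)
    (hα : Function.Surjective α) (hμ : Function.Surjective μ)
    {I : Type*} (θ : Γ →* (I → G)) (hcont : Continuous θ)
    (hmem : ∀ (x : Γ) (i j : I), α (θ x i) = α (θ x j))
    (hsurj : ∀ g : I → G, (∀ i j : I, α (g i) = α (g j)) → ∃ x : Γ, θ x = g)
    (hsol : ∀ (x : Γ) (i : I), α (θ x i) = μ x) :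
    (∀ i : I,
      Function.Surjective ((Pi.evalMonoidHom (fun _ : I => G) i).comp θ) ∧
      α.comp ((Pi.evalMonoidHom (fun _ : I => G) i).comp θ) = μ) ∧
    (∀ I₀ : Finset I,
      (⨅ i ∈ I₀, ((Pi.evalMonoidHom (fun _ : I => G) i).comp θ).ker).relIndex μ.ker =
        ∏ i ∈ I₀, ((Pi.evalMonoidHom (fun _ : I => G) i).comp θ).ker.relIndex μ.ker) := by
  classical
  set K : I → Subgroup Γ := fun i => ((Pi.evalMonoidHom (fun _ : I => G) i).comp θ).ker with hK
  have hKmem : ∀ (i : I) (x : Γ), x ∈ K i ↔ θ x i = 1 := fun i x => Iff.rfl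
  have hker : ∀ i : I, K i ≤ μ.ker := by
    intro i x hx
    have : θ x i = 1 := hx
    simp only [MonoidHom.mem_ker]
    rw [← hsol x i, this, map_one]
  -- covering lemma
  have hcov : ∀ (s : Finset I) (i : I), i ∉ s → μ.ker ≤ (⨅ j ∈ s, K j) ⊔ K i := by
    intro s i his x hx
    have hx1 : ∀ j, α (θ x j) = 1 := fun j => by
      rw [hsol x j]; exact hx
    obtain ⟨u, hu⟩ := hsurj (fun j => if j ∈ s then 1 else θ x j)
      (by intro j k; by_cases hj : j ∈ s <;> by_cases hk : k ∈ s <;>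
        simp [hj, hk, hx1, map_one])
    have hus : u ∈ ⨅ j ∈ s, K j := by
      refine Subgroup.mem_iInf.2 fun j => Subgroup.mem_iInf.2 fun hj => ?_
      show θ u j = 1
      rw [hu]; simp [hj]
    have hvi : u⁻¹ * x ∈ K i := by
      show θ (u⁻¹ * x) i = 1
      rw [map_mul, map_inv, hu]
      simp [his]
    have : x = u * (u⁻¹ * x) := by group
    rw [this]
    exact mul_mem (le_sup_left (α := Subgroup Γ) hus) (le_sup_right (α := Subgroup Γ) hvi)
  refine ⟨fun i => ⟨?_, ?_⟩, ?_⟩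
  · intro g
    obtain ⟨x, hx⟩ := hsurj (fun _ => g) (fun _ _ => rfl)
    exact ⟨x, by simp [hx]⟩
  · ext x; exact hsol x i
  · intro I₀
    induction I₀ using Finset.induction_on with
    | empty => simp
    | insert _ _ hi _ =>
      rename_i i s ih
      rw [Finset.iInf_insert, Finset.prod_insert hi, ← ih]
      by_cases hs : s = ∅
      · subst hs; simp
      · obtain ⟨j, hj⟩ := Finset.nonempty_iff_ne_empty.2 hs
        have hKle : (⨅ j ∈ s, K j) ≤ μ.ker := le_trans (iInf₂_le j hj) (hker j)
        have hsup : μ.ker = (⨅ j ∈ s, K j) ⊔ K i :=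
          le_antisymm (hcov s i hi) (sup_le hKle (hker i))
        haveI : (K i).Normal := MonoidHom.normal_ker _
        calc (K i ⊓ ⨅ j ∈ s, K j).relIndex μ.ker
            = (K i ⊓ ⨅ j ∈ s, K j).relIndex (⨅ j ∈ s, K j) *
                (⨅ j ∈ s, K j).relIndex μ.ker :=
              (Subgroup.relIndex_mul_relIndex _ _ _ inf_le_right hKle).symm
          _ = (K i).relIndex (⨅ j ∈ s, K j) * (⨅ j ∈ s, K j).relIndex μ.ker := by
              rw [Subgroup.inf_relIndex_right]
          _ = (K i).relIndex μ.ker * (⨅ j ∈ s, K j).relIndex μ.ker := by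
              rw [hsup, Subgroup.relIndex_sup_right]
end

section
/- Let Γ be a group, let A wr_{G0} G be a twisted wreath product of finite groups with projection α : A wr_{G0} G → G, let φ : Γ → G be a surjective homomorphism, and let θ : Γ → A wr_{G0} G be a homomorphism with α ∘ θ = φ. For each a ∈ A define f_a ∈ Ind_{G0}^G(A) by f_a(σ) = a^σ for σ ∈ G0 and f_a(σ) = 1 otherwise. If the subgroup {f_a : a ∈ A} is contained in the image θ(Γ), then θ is surjective. -/
open MulOpposite

open scoped Classical

variable {G : Type*} [Group G] (G0 : Subgroup G) {A : Type*} [Group A]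
  (act : G0ᵐᵒᵖ →* MulAut A)

/-- `Ind_{G0}^G(A)`: functions `f : G → A` with `f(σρ) = f(σ)^ρ` for `ρ ∈ G0`, where the
right action of `G0` on `A` is encoded by `act : G0ᵐᵒᵖ →* MulAut A`. -/
def TwInd : Subgroup (G → A) where
  carrier := {f | ∀ (σ : G) (ρ : G0), f (σ * ρ) = act (op ρ) (f σ)}
  one_mem' := by intro σ ρ; simp
  mul_mem' := by
    intro f g hf hg σ ρ
    simp only [Pi.mul_apply, hf σ ρ, hg σ ρ, map_mul]
  inv_mem' := by
    intro f hf σ ρ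
    simp only [Pi.inv_apply, hf σ ρ, map_inv]

/-- The left action of `G` on `Ind_{G0}^G(A)` given by `(σ • f)(τ) = f(σ⁻¹τ)`; the
twisted wreath product `A wr_{G0} G` is `TwInd G0 act ⋊[twAct G0 act] G`. -/
def twAct : G →* MulAut (TwInd G0 act) where
  toFun σ :=
    { toFun := fun f => ⟨fun τ => (f : G → A) (σ⁻¹ * τ), by
        intro τ ρ
        simpa [mul_assoc] using f.2 (σ⁻¹ * τ) ρ⟩
      invFun := fun f => ⟨fun τ => (f : G → A) (σ * τ), by
        intro τ ρ
        simpa [mul_assoc] using f.2 (σ * τ) ρ⟩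
      left_inv := by
        intro f; ext τ; simp [mul_assoc]
      right_inv := by
        intro f; ext τ; simp [mul_assoc]
      map_mul' := by
        intro f g; ext τ; rfl }
  map_one' := by ext f τ; simp
  map_mul' := by intro σ σ'; ext f τ; simp [mul_assoc]

/-- The distinguished copy of `A` inside `Ind_{G0}^G(A)`: for `a ∈ A`, `f_a(σ) = a^σ`
for `σ ∈ G0` and `f_a(σ) = 1` otherwise. -/
noncomputable def fA (a : A) : TwInd G0 act :=
  ⟨fun σ => if h : σ ∈ G0 then act (op ⟨σ, h⟩) a else 1, by
    intro σ ρ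
    dsimp only
    by_cases h : σ ∈ G0
    · have h2 : σ * ρ ∈ G0 := G0.mul_mem h ρ.2
      rw [dif_pos h2, dif_pos h]
      have : (⟨σ * ρ, h2⟩ : G0) = ⟨σ, h⟩ * ρ := rfl
      rw [this, op_mul, map_mul]
      rfl
    · have h2 : σ * ρ ∉ G0 := by
        intro hc
        exact h (by simpa using G0.mul_mem hc (G0.inv_mem ρ.2))
      rw [dif_neg h2, dif_neg h, map_one]⟩

/-- if `θ` is a weak solution of the embedding problem
`(φ : Γ → G, α : A wr_{G0} G → G)` whose image contains the distinguished copy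
`{f_a : a ∈ A}` of `A`, then `θ` is surjective. -/
theorem twistedWreath_weak_solution_surjective
    {Γ : Type*} [Group Γ] [Finite G] [Finite A]
    (φ : Γ →* G) (hφ : Function.Surjective φ)
    (θ : Γ →* TwInd G0 act ⋊[twAct G0 act] G)
    (hθ : SemidirectProduct.rightHom.comp θ = φ)
    (hsub : ∀ a : A,
      (SemidirectProduct.inl (fA G0 act a) : TwInd G0 act ⋊[twAct G0 act] G) ∈ θ.range) :
    Function.Surjective θ := by

  -- Step 1: the θ-image contains `inl (σ • f_a)` for every σ and a.
  have hright : ∀ γ : Γ, (θ γ).right = φ γ := by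
    intro γ
    exact DFunLike.congr_fun hθ γ
  have key : ∀ (σ : G) (a : A),
      (SemidirectProduct.inl (twAct G0 act σ (fA G0 act a)) :
        TwInd G0 act ⋊[twAct G0 act] G) ∈ θ.range := by
    intro σ a
    obtain ⟨γ, hγ⟩ := hφ σ
    set g : TwInd G0 act ⋊[twAct G0 act] G := θ γ with hg
    have hgr : g.right = σ := by rw [hg, hright, hγ]
    set n : TwInd G0 act := g.left with hn
    set b : A := ((n : G → A) σ)⁻¹ * a * ((n : G → A) σ) with hbdef
    have hab : (n : G → A) σ * b * ((n : G → A) σ)⁻¹ = a := by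
      rw [hbdef]; group
    have hgdecomp : g = SemidirectProduct.inl n * SemidirectProduct.inr σ := by
      rw [hn, ← hgr]
      exact (SemidirectProduct.inl_left_mul_inr_right g).symm
    have hkey2 : n * twAct G0 act σ (fA G0 act b) * n⁻¹
        = twAct G0 act σ (fA G0 act a) := by
      ext τ
      show (n : G → A) τ * ((fA G0 act b : G → A) (σ⁻¹ * τ)) * ((n : G → A) τ)⁻¹
          = (fA G0 act a : G → A) (σ⁻¹ * τ)
      by_cases h : σ⁻¹ * τ ∈ G0
      · set ρ : G0 := ⟨σ⁻¹ * τ, h⟩ with hρ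
        have hτ : τ = σ * ρ := by rw [hρ]; simp
        have hnτ : (n : G → A) τ = act (op ρ) ((n : G → A) σ) := by
          rw [hτ]; exact n.2 σ ρ
        show (n : G → A) τ * (if h' : σ⁻¹ * τ ∈ G0 then act (op ⟨σ⁻¹ * τ, h'⟩) b else 1)
            * ((n : G → A) τ)⁻¹
          = (if h' : σ⁻¹ * τ ∈ G0 then act (op ⟨σ⁻¹ * τ, h'⟩) a else 1)
        rw [dif_pos h, dif_pos h, hnτ, ← hρ]
        simp only [hbdef, map_mul, map_inv]
        group
      · show (n : G → A) τ * (if h' : σ⁻¹ * τ ∈ G0 then act (op ⟨σ⁻¹ * τ, h'⟩) b else 1)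
            * ((n : G → A) τ)⁻¹
          = (if h' : σ⁻¹ * τ ∈ G0 then act (op ⟨σ⁻¹ * τ, h'⟩) a else 1)
        rw [dif_neg h, dif_neg h, mul_one, mul_inv_cancel]
    have hconj : g * SemidirectProduct.inl (fA G0 act b) * g⁻¹
        = SemidirectProduct.inl (twAct G0 act σ (fA G0 act a)) := by
      rw [hgdecomp, ← hkey2, map_mul, map_mul, SemidirectProduct.inl_aut, mul_inv_rev,
        ← map_inv, ← map_inv]
      group
    rw [← hconj]
    exact mul_mem (mul_mem ⟨γ, hg.symm⟩ (hsub b)) (inv_mem ⟨γ, hg.symm⟩)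
  -- Step 2: the θ-image contains `inl f` for every f in TwInd.
  have := Fintype.ofFinite G
  have main : ∀ f : TwInd G0 act,
      (SemidirectProduct.inl f : TwInd G0 act ⋊[twAct G0 act] G) ∈ θ.range := by
    suffices H : ∀ (k : ℕ) (f : TwInd G0 act),
        (Finset.univ.filter fun σ => (f : G → A) σ ≠ 1).card ≤ k →
        (SemidirectProduct.inl f : TwInd G0 act ⋊[twAct G0 act] G) ∈ θ.range by
      intro f; exact H _ f le_rfl
    intro k
    induction k with
    | zero =>
      intro f hf
      have h1 : f = 1 := by
        ext τ
        by_contra hτ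
        have : τ ∈ Finset.univ.filter fun σ => (f : G → A) σ ≠ 1 := by
          simp only [Finset.mem_filter, Finset.mem_univ, true_and]
          exact hτ
        have := Finset.card_pos.2 ⟨τ, this⟩
        omega
      rw [h1, map_one]
      exact one_mem _
    | succ k ih =>
      intro f hf
      by_cases h0 : ∃ σ, (f : G → A) σ ≠ 1
      · obtain ⟨σ, hσ⟩ := h0
        set g : TwInd G0 act := twAct G0 act σ (fA G0 act ((f : G → A) σ)) with hgd
        have hg : (SemidirectProduct.inl g : TwInd G0 act ⋊[twAct G0 act] G) ∈ θ.range :=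
          key σ _
        have hgval : ∀ τ, (g : G → A) τ
            = if h' : σ⁻¹ * τ ∈ G0 then act (op ⟨σ⁻¹ * τ, h'⟩) ((f : G → A) σ) else 1 := by
          intro τ; rfl
        have hsupp : (Finset.univ.filter fun τ => ((f * g⁻¹ : TwInd G0 act) : G → A) τ ≠ 1)
            ⊆ (Finset.univ.filter fun τ => (f : G → A) τ ≠ 1).erase σ := by
          intro τ hτ
          simp only [Finset.mem_filter, Finset.mem_univ, true_and] at hτ
          have hval : ((f * g⁻¹ : TwInd G0 act) : G → A) τ
              = (f : G → A) τ * ((g : G → A) τ)⁻¹ := rfl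
          by_cases h : σ⁻¹ * τ ∈ G0
          · exfalso
            apply hτ
            set ρ : G0 := ⟨σ⁻¹ * τ, h⟩ with hρ
            have hτρ : τ = σ * ρ := by rw [hρ]; simp
            have hfτ : (f : G → A) τ = act (op ρ) ((f : G → A) σ) := by
              rw [hτρ]; exact f.2 σ ρ
            rw [hval, hgval, dif_pos h, hfτ]
            exact mul_inv_cancel _
          · have hg1 : (g : G → A) τ = 1 := by rw [hgval, dif_neg h]
            have hfτ : (f : G → A) τ ≠ 1 := by
              rw [hval, hg1] at hτ; simpa using hτ
            refine Finset.mem_erase.2 ⟨?_, ?_⟩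
            · intro he; apply h; rw [he]; simpa using G0.one_mem
            · simp only [Finset.mem_filter, Finset.mem_univ, true_and]; exact hfτ
        have hσmem : σ ∈ Finset.univ.filter fun τ => (f : G → A) τ ≠ 1 := by
          simp only [Finset.mem_filter, Finset.mem_univ, true_and]; exact hσ
        have hcard : (Finset.univ.filter
            fun τ => ((f * g⁻¹ : TwInd G0 act) : G → A) τ ≠ 1).card ≤ k := by
          have h1 := Finset.card_le_card hsupp
          have h2 := Finset.card_erase_of_mem hσmem
          omega
        have h3 := ih (f * g⁻¹) hcard
        have : f = f * g⁻¹ * g := by group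
        rw [this, map_mul]
        exact mul_mem h3 hg
      · push_neg at h0
        have h1 : f = 1 := by ext τ; exact h0 τ
        rw [h1, map_one]
        exact one_mem _
  -- Step 3: conclude surjectivity.
  intro x
  obtain ⟨γ, hγ⟩ := hφ x.right
  have hr : (x * (θ γ)⁻¹).right = 1 := by
    simp only [SemidirectProduct.mul_right, SemidirectProduct.inv_right, hright, hγ]
    exact mul_inv_cancel _
  have hx : x * (θ γ)⁻¹ = SemidirectProduct.inl ((x * (θ γ)⁻¹).left) := by
    apply SemidirectProduct.ext
    · rfl
    · rw [hr]; simp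
  obtain ⟨δ, hδ⟩ := main ((x * (θ γ)⁻¹).left)
  refine ⟨δ * γ, ?_⟩
  rw [map_mul, hδ, ← hx]
  group
end

section
/- Let A wr_{G0} G be a twisted wreath product of finite groups with projection α : A wr_{G0} G → G, let π : Ind_{G0}^G(A) ⋊ G0 → A ⋊ G0 be the Shapiro map, let α0 : A ⋊ G0 → G0 be the canonical projection, and let i : G0 → A ⋊ G0 be a homomorphism with α0 ∘ i = id (a splitting of α0). Then there exists a homomorphism j : G → A wr_{G0} G with α ∘ j = id (a splitting of α) such that for every σ ∈ G0 one has j(σ) ∈ Ind_{G0}^G(A) ⋊ G0 and π(j(σ)) = i(σ). -/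
open MulOpposite

open scoped Classical

variable {G : Type*} [Group G] (G0 : Subgroup G) {A : Type*} [Group A]
  (act : G0ᵐᵒᵖ →* MulAut A)

/-- The anti-homomorphism `x ↦ op x⁻¹`, as a homomorphism `H →* Hᵐᵒᵖ`. -/
def invOpHom (H : Type*) [Group H] : H →* Hᵐᵒᵖ where
  toFun x := op x⁻¹
  map_one' := by simp
  map_mul' x y := by simp only [mul_inv_rev, op_mul]

/-- The left action of `G0` on `A` corresponding to the given right action `act`;
the semidirect product `A ⋊ G0` is `A ⋊[baseAct G0 act] G0`. -/
def baseAct : G0 →* MulAut A := act.comp (invOpHom G0)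

/-- The Shapiro map `Ind_{G0}^G(A) ⋊ G0 → A ⋊ G0`, `fσ ↦ f(1)σ`, defined on the
subgroup `Ind_{G0}^G(A) ⋊ G0 = rightHom⁻¹(G0)` of the twisted wreath product. -/
def shapiro :
    (Subgroup.comap (SemidirectProduct.rightHom :
        (TwInd G0 act ⋊[twAct G0 act] G) →* G) G0) →* A ⋊[baseAct G0 act] G0 :=
  MonoidHom.mk'
    (fun x => ⟨((x : TwInd G0 act ⋊[twAct G0 act] G).left : G → A) 1,
      ⟨SemidirectProduct.rightHom (x : TwInd G0 act ⋊[twAct G0 act] G), x.2⟩⟩)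
    (by
      intro x y
      set xe := (x : TwInd G0 act ⋊[twAct G0 act] G)
      set ye := (y : TwInd G0 act ⋊[twAct G0 act] G)
      have hcoe : ((x * y : _) : TwInd G0 act ⋊[twAct G0 act] G) = xe * ye := rfl
      apply SemidirectProduct.ext
      · show ((xe * ye).left : G → A) 1 = _
        rw [SemidirectProduct.mul_left]
        have h1 : ((xe.left * (twAct G0 act) xe.right ye.left : TwInd G0 act) : G → A) 1 =
            (xe.left : G → A) 1 * (ye.left : G → A) (xe.right⁻¹ * 1) := rfl
        rw [h1, mul_one]
        have h2 : (ye.left : G → A) (xe.right⁻¹) =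
            act (op (⟨xe.right, x.2⟩ : G0)⁻¹) ((ye.left : G → A) 1) := by
          have := ye.left.2 1 (⟨xe.right, x.2⟩ : G0)⁻¹
          simpa using this
        rw [h2]
        rfl
      · rfl)

/-- a splitting `i : G0 → A ⋊ G0` of the projection `α₀ : A ⋊ G0 → G0`
lifts to a splitting `j : G → A wr_{G0} G` of the projection of the twisted wreath
product with `j(σ) ∈ Ind_{G0}^G(A) ⋊ G0` and `π(j(σ)) = i(σ)` for all `σ ∈ G0`,
where `π` is the Shapiro map. -/
theorem exists_splitting_compatible_with_shapiro [Finite G] [Finite A]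
    (i : G0 →* A ⋊[baseAct G0 act] G0)
    (hi : SemidirectProduct.rightHom.comp i = MonoidHom.id G0) :
    ∃ j : G →* TwInd G0 act ⋊[twAct G0 act] G,
      SemidirectProduct.rightHom.comp j = MonoidHom.id G ∧
      ∀ σ : G0, ∃ h : j ↑σ ∈ Subgroup.comap (SemidirectProduct.rightHom :
          (TwInd G0 act ⋊[twAct G0 act] G) →* G) G0,
        shapiro G0 act ⟨j ↑σ, h⟩ = i σ := by
  classical
  -- a section of the quotient map sending the trivial coset to 1
  set r : G ⧸ G0 → G := fun q => if q = ((1 : G) : G ⧸ G0) then 1 else q.out with hr_def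
  have hr : ∀ q : G ⧸ G0, ((r q : G) : G ⧸ G0) = q := by
    intro q
    by_cases h : q = ((1 : G) : G ⧸ G0)
    · simp [hr_def, h]
    · simp [hr_def, h, QuotientGroup.out_eq']
  have hr1 : r ((1 : G) : G ⧸ G0) = 1 := by simp [hr_def]
  have hmem : ∀ τ : G, (r ((τ : G ⧸ G0)))⁻¹ * τ ∈ G0 := by
    intro τ
    rw [← QuotientGroup.eq]
    exact hr _
  set ρ : G → G0 := fun τ => ⟨(r ((τ : G ⧸ G0)))⁻¹ * τ, hmem τ⟩ with hρ_def
  have hρ_mul : ∀ (τ : G) (x : G0), ρ (τ * x) = ρ τ * x := by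
    intro τ x
    have hq : ((τ * (x : G) : G) : G ⧸ G0) = ((τ : G) : G ⧸ G0) :=
      QuotientGroup.mk_mul_of_mem τ x.2
    ext
    show (r ((τ * (x : G) : G) : G ⧸ G0))⁻¹ * (τ * x) = ((r ((τ : G) : G ⧸ G0))⁻¹ * τ) * x
    rw [hq, mul_assoc]
  have hρ_of_mem : ∀ x : G0, ρ (x : G) = x := by
    intro x
    have hq : (((x : G) : G) : G ⧸ G0) = ((1 : G) : G ⧸ G0) := by
      rw [QuotientGroup.eq]
      rw [mul_one]; exact inv_mem x.2
    ext
    show (r (((x : G) : G) : G ⧸ G0))⁻¹ * (x : G) = (x : G)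
    rw [hq, hr1, inv_one, one_mul]
  have hρ_one : ρ 1 = 1 := by simpa using hρ_of_mem 1
  -- the cocycle a : G0 → A coming from i
  set a : G0 → A := fun x => (i x).left with ha_def
  have hi' : ∀ x : G0, (i x).right = x := fun x => DFunLike.congr_fun hi x
  have hcoc : ∀ x y : G0, a (x * y) = a x * act (op x⁻¹) (a y) := by
    intro x y
    have h := congrArg SemidirectProduct.left (map_mul i x y)
    rw [SemidirectProduct.mul_left, hi'] at h
    simpa [ha_def, baseAct, invOpHom] using h
  -- the induced cocycle c : G → TwInd
  have hc_mem : ∀ σ : G,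
      (fun τ => act (op (ρ τ)) (a (ρ τ * (ρ (σ⁻¹ * τ))⁻¹))) ∈ TwInd G0 act := by
    intro σ τ x
    show act (op (ρ (τ * x))) (a (ρ (τ * x) * (ρ (σ⁻¹ * (τ * x)))⁻¹)) =
      act (op x) (act (op (ρ τ)) (a (ρ τ * (ρ (σ⁻¹ * τ))⁻¹)))
    have h2 : ρ (σ⁻¹ * (τ * x)) = ρ (σ⁻¹ * τ) * x := by
      rw [← mul_assoc]; exact hρ_mul _ x
    rw [hρ_mul τ x, h2, mul_inv_rev, mul_assoc, mul_inv_cancel_left, op_mul, map_mul]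
    rfl
  set c : G → TwInd G0 act := fun σ =>
    ⟨fun τ => act (op (ρ τ)) (a (ρ τ * (ρ (σ⁻¹ * τ))⁻¹)), hc_mem σ⟩ with hc_def
  -- the key cocycle identity
  have key : ∀ σ σ' τ : G,
      act (op (ρ τ)) (a (ρ τ * (ρ (σ'⁻¹ * (σ⁻¹ * τ)))⁻¹)) =
      act (op (ρ τ)) (a (ρ τ * (ρ (σ⁻¹ * τ))⁻¹)) *
        act (op (ρ (σ⁻¹ * τ))) (a (ρ (σ⁻¹ * τ) * (ρ (σ'⁻¹ * (σ⁻¹ * τ)))⁻¹)) := by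
    intro σ σ' τ
    set x : G0 := ρ τ * (ρ (σ⁻¹ * τ))⁻¹ with hx
    set y : G0 := ρ (σ⁻¹ * τ) * (ρ (σ'⁻¹ * (σ⁻¹ * τ)))⁻¹ with hy
    have hxy : ρ τ * (ρ (σ'⁻¹ * (σ⁻¹ * τ)))⁻¹ = x * y := by
      rw [hx, hy]; group
    have hxinv : x⁻¹ * ρ τ = ρ (σ⁻¹ * τ) := by rw [hx]; group
    rw [hxy, hcoc, map_mul]
    congr 1
    have h3 : act (op (ρ τ)) (act (op x⁻¹) (a y)) = act (op (x⁻¹ * ρ τ)) (a y) := by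
      rw [op_mul, map_mul, MulAut.mul_apply]
    rw [h3, hxinv]
  -- construct the splitting j
  refine ⟨MonoidHom.mk' (fun σ => ⟨c σ, σ⟩) ?_, ?_, ?_⟩
  · intro σ σ'
    apply SemidirectProduct.ext
    · rw [SemidirectProduct.mul_left]
      show c (σ * σ') = c σ * (twAct G0 act) σ (c σ')
      apply Subtype.ext
      funext τ
      have harg : (σ * σ')⁻¹ * τ = σ'⁻¹ * (σ⁻¹ * τ) := by group
      show act (op (ρ τ)) (a (ρ τ * (ρ ((σ * σ')⁻¹ * τ))⁻¹)) =
        act (op (ρ τ)) (a (ρ τ * (ρ (σ⁻¹ * τ))⁻¹)) *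
          act (op (ρ (σ⁻¹ * τ))) (a (ρ (σ⁻¹ * τ) * (ρ (σ'⁻¹ * (σ⁻¹ * τ)))⁻¹))
      rw [harg]
      exact key σ σ' τ
    · rfl
  · rfl
  · intro σ
    refine ⟨σ.2, ?_⟩
    apply SemidirectProduct.ext
    · show act (op (ρ 1)) (a (ρ 1 * (ρ ((σ : G)⁻¹ * 1))⁻¹)) = (i σ).left
      have h1 : ρ ((σ : G)⁻¹ * 1) = σ⁻¹ := by
        rw [mul_one]
        exact hρ_of_mem σ⁻¹
      rw [h1, hρ_one, one_mul, inv_inv, op_one, map_one]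
      rfl
    · exact Subtype.ext rfl |>.trans (hi' σ).symm
end

section
/- Let G be a group, N a normal subgroup of G, N0 a subgroup of G with N ⊆ N0, and let φ : G → H be a surjective homomorphism onto a group H. Assume that H and G/N have no common nontrivial quotient, i.e. every group that is simultaneously a quotient (surjective homomorphic image) of H and a quotient of G/N is trivial. Then there is a surjective homomorphism from N0 onto H. In particular, if H has a subgroup of index n, then N0 has a subgroup of index n. -/
universe u

/-- if `N ≤ N₀ ≤ G` with `N` normal in `G`, `φ : G → H` is surjective, and `H`
and `G/N` have no common nontrivial quotient, then `H` is a quotient of `N₀`; in particular,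
if `H` has a subgroup of index `n`, so does `N₀`. -/
theorem surjective_of_no_common_quotient
    {G H : Type u} [Group G] [Group H]
    (N N₀ : Subgroup G) [N.Normal] (hNN₀ : N ≤ N₀)
    (φ : G →* H) (hφ : Function.Surjective φ)
    (hcommon : ∀ (Q : Type u) [Group Q] (f : H →* Q) (g : G ⧸ N →* Q),
      Function.Surjective f → Function.Surjective g → Subsingleton Q) :
    (∃ ψ : N₀ →* H, Function.Surjective ψ) ∧
    (∀ n : ℕ, (∃ K : Subgroup H, K.index = n) → ∃ K : Subgroup N₀, K.index = n) := by
  have hMn : (N.map φ).Normal := Subgroup.Normal.map ‹N.Normal› φ hφ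
  set Q := H ⧸ N.map φ
  let f : H →* Q := QuotientGroup.mk' (N.map φ)
  have hker : N ≤ (f.comp φ).ker := by
    intro x hx
    simp only [MonoidHom.mem_ker, MonoidHom.comp_apply, f, QuotientGroup.mk'_apply]
    exact (QuotientGroup.eq_one_iff _).mpr (Subgroup.mem_map_of_mem φ hx)
  let g : G ⧸ N →* Q := QuotientGroup.lift N (f.comp φ) hker
  have hg : Function.Surjective g := by
    intro q
    obtain ⟨x, hx⟩ := (QuotientGroup.mk'_surjective (N.map φ)).comp hφ q
    exact ⟨QuotientGroup.mk x, hx⟩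
  have hsub : Subsingleton Q :=
    hcommon Q f g (QuotientGroup.mk'_surjective _) hg
  have htop : N.map φ = ⊤ := by
    rw [eq_top_iff]
    intro h _
    have : f h = 1 := Subsingleton.elim _ _
    exact (QuotientGroup.eq_one_iff h).mp this
  have hψ : ∃ ψ : N₀ →* H, Function.Surjective ψ := by
    refine ⟨φ.comp N₀.subtype, ?_⟩
    intro h
    have : h ∈ N.map φ := htop ▸ Subgroup.mem_top h
    obtain ⟨x, hx, hxh⟩ := this
    exact ⟨⟨x, hNN₀ hx⟩, hxh⟩
  refine ⟨hψ, ?_⟩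
  obtain ⟨ψ, hψs⟩ := hψ
  rintro n ⟨K, hK⟩
  exact ⟨K.comap ψ, by rw [Subgroup.index_comap_of_surjective K hψs, hK]⟩
end

section
/- Let F be a field and let a, b, c ∈ F[X] be polynomials such that a and b are relatively prime and c ≠ 0. Then there exists a finite subset S ⊆ F such that for every α ∈ F ∖ S the polynomials a + α·b and c are relatively prime. Moreover, if the formal derivative b' is nonzero, then S can be chosen so that in addition a + α·b is separable (has no repeated roots) for every α ∈ F ∖ S. -/
open Polynomial

/-- if `a, b ∈ F[X]` are relatively prime and `c ≠ 0`, then for all `α ∈ F`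
outside a finite set `S`, the polynomials `a + α·b` and `c` are relatively prime; moreover,
if `b' ≠ 0`, `S` can be chosen such that in addition `a + α·b` is separable. -/
theorem exists_finset_isCoprime_add_smul
    {F : Type*} [Field F] (a b c : Polynomial F)
    (hab : IsCoprime a b) (hc : c ≠ 0) :
    (∃ S : Finset F, ∀ α : F, α ∉ S → IsCoprime (a + Polynomial.C α * b) c) ∧
    (Polynomial.derivative b ≠ 0 →
      ∃ S : Finset F, ∀ α : F, α ∉ S →
        IsCoprime (a + Polynomial.C α * b) c ∧ (a + Polynomial.C α * b).Separable) := by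
  classical
  set K := AlgebraicClosure F with hK
  set φ : F →+* K := algebraMap F K with hφ
  set W : Polynomial F := a * derivative b - derivative a * b with hW
  set bad : Finset K := (((c.map φ).roots + (W.map φ).roots).toFinset).image
    (fun x => -(aeval x a) / (aeval x b)) with hbad
  set S : Finset F := bad.preimage φ (φ.injective.injOn) with hSdef
  have hS : ∀ α : F, α ∉ S → φ α ∉ bad := fun α h hm => h (Finset.mem_preimage.mpr hm)
  -- basic evaluation facts
  have heval : ∀ (α : F) (x : K), aeval x (a + Polynomial.C α * b)
      = aeval x a + φ α * aeval x b := by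
    intro α x; simp [map_add, map_mul, aeval_C, hφ]
  have hcommon : ∀ (α : F) (x : K), aeval x (a + Polynomial.C α * b) = 0 →
      aeval x b ≠ 0 ∧ φ α = -(aeval x a) / (aeval x b) := by
    intro α x hx
    rw [heval] at hx
    have hbx : aeval x b ≠ 0 := by
      intro hb0
      have ha0 : aeval x a = 0 := by rw [hb0, mul_zero, add_zero] at hx; exact hx
      have := (Polynomial.isCoprime_iff_aeval_ne_zero_of_isAlgClosed F K a b).mp hab x
      tauto
    refine ⟨hbx, ?_⟩
    rw [eq_div_iff hbx]
    linear_combination hx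
  -- coprimality with c
  have hcopc : ∀ α : F, α ∉ S → IsCoprime (a + Polynomial.C α * b) c := by
    intro α hα
    rw [Polynomial.isCoprime_iff_aeval_ne_zero_of_isAlgClosed F K]
    intro x
    by_contra h
    push_neg at h
    obtain ⟨hp, hcx⟩ := h
    obtain ⟨hbx, hφα⟩ := hcommon α x hp
    apply hS α hα
    rw [hbad]
    apply Finset.mem_image.mpr
    refine ⟨x, ?_, hφα.symm⟩
    rw [Multiset.mem_toFinset, Multiset.mem_add]
    left
    rw [Polynomial.mem_roots']
    refine ⟨by simpa [Polynomial.map_ne_zero_iff φ.injective] using hc, ?_⟩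
    rw [Polynomial.IsRoot, Polynomial.eval_map_algebraMap]
    exact hcx
  refine ⟨⟨S, hcopc⟩, fun hb' => ⟨S, fun α hα => ⟨hcopc α hα, ?_⟩⟩⟩
  -- separability
  have hWne : W ≠ 0 := by
    intro hW0
    have h1 : a * derivative b = derivative a * b := sub_eq_zero.mp (hW ▸ hW0)
    have hdvd : b ∣ derivative b :=
      hab.symm.dvd_of_dvd_mul_left ⟨derivative a, by rw [h1, mul_comm]⟩
    have hnd : b.natDegree ≠ 0 := by
      intro h0
      have := Polynomial.eq_C_of_natDegree_eq_zero h0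
      apply hb'
      rw [this, Polynomial.derivative_C]
    have h2 : b.natDegree ≤ (derivative b).natDegree :=
      Polynomial.natDegree_le_of_dvd hdvd hb'
    exact absurd h2 (not_le.mpr (Polynomial.natDegree_derivative_lt hnd))
  rw [Polynomial.Separable, Polynomial.isCoprime_iff_aeval_ne_zero_of_isAlgClosed F K]
  intro x
  by_contra h
  push_neg at h
  obtain ⟨hp, hp'⟩ := h
  obtain ⟨hbx, hφα⟩ := hcommon α x hp
  have heq1 : aeval x a = -(φ α) * aeval x b := by
    rw [heval] at hp; linear_combination hp
  have hder : derivative (a + Polynomial.C α * b) =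
      derivative a + Polynomial.C α * derivative b := by
    simp [Polynomial.derivative_add, Polynomial.derivative_C_mul]
  rw [hder] at hp'
  have heq2 : aeval x (derivative a) = -(φ α) * aeval x (derivative b) := by
    simp only [map_add, map_mul, aeval_C] at hp'
    linear_combination hp'
  have hWx : aeval x W = 0 := by
    rw [hW]
    simp only [map_sub, map_mul]
    rw [heq1, heq2]
    ring
  apply hS α hα
  rw [hbad]
  apply Finset.mem_image.mpr
  refine ⟨x, ?_, hφα.symm⟩
  rw [Multiset.mem_toFinset, Multiset.mem_add]
  right
  rw [Polynomial.mem_roots']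
  refine ⟨by simpa [Polynomial.map_ne_zero_iff φ.injective] using hWne, ?_⟩
  rw [Polynomial.IsRoot, Polynomial.eval_map_algebraMap]
  exact hWx
end

section
/- Let F be an infinite field, let a, b, p₁, p₂ ∈ F[X] be nonzero pairwise relatively prime polynomials, and let α₁, α₂ ∈ F be distinct nonzero elements. Then for every integer n > deg p₁ + deg p₂ there exist a polynomial c ∈ F[X] of degree n and separable polynomials h₁, h₂ ∈ F[X] such that a = pᵢ·hᵢ + b·c·αᵢ and gcd(hᵢ, a·pᵢ) = 1 (a unit) for i = 1, 2. -/
open Polynomial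

lemma coprime_linear {F : Type*} [Field F] (t : F) (w : Polynomial F)
    (h : w.eval t ≠ 0) : IsCoprime (X - C t) w :=
  ((prime_X_sub_C t).coprime_iff_not_dvd).mpr fun hd => h (dvd_iff_isRoot.mp hd)

lemma coprime_linear_pow {F : Type*} [Field F] (t : F) (k : ℕ) (w : Polynomial F)
    (h : w.eval t ≠ 0) : IsCoprime ((X - C t) ^ k) w :=
  (coprime_linear t w h).pow_left

lemma deriv_bad_subsingleton {F : Type*} [Field F] (e : Polynomial F) (he : e ≠ 0)
    (t : F) (k : ℕ) :
    {β : F | Polynomial.derivative (e * ((X - C t) ^ k * (X - C β))) = 0}.Subsingleton := by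
  intro β hβ β' hβ'
  by_contra hne
  simp only [Set.mem_setOf_eq] at hβ hβ'
  have key : ∀ γ : F, e * ((X - C t) ^ k * (X - C γ))
      = e * (X - C t) ^ (k + 1) + (C t - C γ) * (e * (X - C t) ^ k) := by
    intro γ; ring
  have hd : ∀ γ : F, Polynomial.derivative (e * ((X - C t) ^ k * (X - C γ)))
      = Polynomial.derivative (e * (X - C t) ^ (k + 1))
        + (C t - C γ) * Polynomial.derivative (e * (X - C t) ^ k) := by
    intro γ
    rw [key γ, Polynomial.derivative_add]
    refine congrArg (Polynomial.derivative (e * (X - C t) ^ (k + 1)) + ·) ?_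
    rw [Polynomial.derivative_mul]
    simp
  rw [hd] at hβ hβ'
  have hsub : (C β' - C β) * Polynomial.derivative (e * (X - C t) ^ k) = 0 := by
    linear_combination hβ - hβ'
  have hCne : (C β' - C β : Polynomial F) ≠ 0 := by
    rw [sub_ne_zero]
    exact fun hc => hne (C_injective (hc.symm)) |>.elim
  have hDk : Polynomial.derivative (e * (X - C t) ^ k) = 0 :=
    (mul_eq_zero.mp hsub).resolve_left hCne
  have hD1 : Polynomial.derivative (e * (X - C t) ^ (k + 1)) = 0 := by
    have := hβ; rw [hDk, mul_zero, add_zero] at this; exact this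
  have hexp : Polynomial.derivative (e * (X - C t) ^ (k + 1))
      = Polynomial.derivative (e * (X - C t) ^ k) * (X - C t) + e * (X - C t) ^ k := by
    have h1 : e * (X - C t) ^ (k + 1) = (e * (X - C t) ^ k) * (X - C t) := by ring
    rw [h1, Polynomial.derivative_mul]
    simp
  rw [hexp, hDk, zero_mul, zero_add] at hD1
  exact (mul_ne_zero he (pow_ne_zero _ (X_sub_C_ne_zero t))) hD1


lemma bad_finite {F : Type*} [Field F] (A g f : Polynomial F)
    (hA : A ≠ 0) (hg : g ≠ 0)
    (hgf : IsCoprime g f) (hfA : IsCoprime f A) (hf' : f.derivative ≠ 0) :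
    {l : F | ¬ ((g - C l * f).Separable ∧ IsCoprime (g - C l * f) A)}.Finite := by
  classical
  have hf : f ≠ 0 := fun h => hf' (by simp [h])
  set W : Polynomial F := g * f.derivative - g.derivative * f with hWdef
  have hW : W ≠ 0 := by
    intro h0
    have hdvd : f ∣ g * f.derivative := ⟨g.derivative, by linear_combination h0⟩
    have : f ∣ f.derivative := (hgf.symm).dvd_of_dvd_mul_left hdvd
    have h1 := Polynomial.degree_le_of_dvd this hf'
    exact absurd h1 (not_le.mpr (Polynomial.degree_derivative_lt hf))
  have hAW : A * W ≠ 0 := mul_ne_zero hA hW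
  set K := AlgebraicClosure F with hK
  set φ := algebraMap F K with hphi
  have hS : {x : K | aeval x (A * W) = 0}.Finite := by
    have : {x : K | aeval x (A * W) = 0} = {x : K | IsRoot ((A*W).map φ) x} := by
      ext x; simp [hphi, IsRoot, Polynomial.eval_map, Polynomial.aeval_def]
    rw [this]
    exact Polynomial.finite_setOf_isRoot (by
      exact (Polynomial.map_ne_zero_iff φ.injective).mpr hAW)
  have hT : ((fun x : K => aeval x g / aeval x f) '' {x : K | aeval x (A * W) = 0}).Finite :=
    hS.image _
  apply Set.Finite.preimage (f := φ) φ.injective.injOn hT |>.subset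
  intro l hl
  simp only [Set.mem_setOf_eq, not_and_or] at hl
  have key : ∃ x : K, aeval x (A * W) = 0 ∧ aeval x g = φ l * aeval x f ∧ aeval x f ≠ 0 := by
    rcases hl with hsep | hcop
    · rw [Polynomial.Separable] at hsep
      have hsep2 : ¬ ∀ x : K, aeval x (g - C l * f) ≠ 0 ∨ aeval x (derivative (g - C l * f)) ≠ 0 :=
        fun h => hsep ((Polynomial.isCoprime_iff_aeval_ne_zero_of_isAlgClosed F K _ _).mpr h)
      push_neg at hsep2
      replace hsep := hsep2
      obtain ⟨x, hx1, hx2⟩ := hsep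
      have hfx : aeval x f ≠ 0 := by
        intro hfx
        have hgx : aeval x g = 0 := by
          have := hx1
          simpa [hfx, sub_eq_zero] using this
        have := (Polynomial.isCoprime_iff_aeval_ne_zero_of_isAlgClosed F K g f).mp hgf x
        tauto
      refine ⟨x, ?_, ?_, hfx⟩
      · have hgl : aeval x g = φ l * aeval x f := by
          have := hx1; simp only [map_sub, map_mul, aeval_C, sub_eq_zero] at this; exact this
        have hgl' : aeval x g.derivative = φ l * aeval x f.derivative := by
          have := hx2
          simp only [Polynomial.derivative_sub, Polynomial.derivative_C_mul, map_sub, map_mul,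
            aeval_C, sub_eq_zero] at this
          exact this
        have : aeval x W = 0 := by
          simp only [hWdef, map_sub, map_mul, hgl, hgl']
          ring
        simp [this]
      · have := hx1; simp only [map_sub, map_mul, aeval_C, sub_eq_zero] at this; exact this
    · have hcop2 : ¬ ∀ x : K, aeval x (g - C l * f) ≠ 0 ∨ aeval x A ≠ 0 :=
        fun h => hcop ((Polynomial.isCoprime_iff_aeval_ne_zero_of_isAlgClosed F K _ _).mpr h)
      push_neg at hcop2
      replace hcop := hcop2
      obtain ⟨x, hx1, hx2⟩ := hcop
      have hfx : aeval x f ≠ 0 := by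
        have := (Polynomial.isCoprime_iff_aeval_ne_zero_of_isAlgClosed F K f A).mp hfA x
        tauto
      refine ⟨x, by simp [hx2], ?_, hfx⟩
      have := hx1; simp only [map_sub, map_mul, aeval_C, sub_eq_zero] at this; exact this
  obtain ⟨x, hx, hgl, hfx⟩ := key
  refine ⟨x, hx, ?_⟩
  simp only
  rw [hgl]
  exact mul_div_cancel_right₀ _ hfx


/-- for nonzero pairwise relatively prime `a, b, p₁, p₂ ∈ F[X]` over an
infinite field `F` and distinct nonzero `α₁, α₂ ∈ F`, for every `n > deg p₁ + deg p₂`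
there are `c` of degree `n` and separable `h₁, h₂` with `a = pᵢ hᵢ + b c αᵢ` and
`gcd(hᵢ, a pᵢ) = 1` for `i = 1, 2`. -/
theorem exists_degree_eq_separable_decomposition
    {F : Type*} [Field F] [Infinite F]
    (a b p₁ p₂ : Polynomial F)
    (ha : a ≠ 0) (hb : b ≠ 0) (hp₁ : p₁ ≠ 0) (hp₂ : p₂ ≠ 0)
    (hab : IsCoprime a b) (hap₁ : IsCoprime a p₁) (hap₂ : IsCoprime a p₂)
    (hbp₁ : IsCoprime b p₁) (hbp₂ : IsCoprime b p₂) (hp₁p₂ : IsCoprime p₁ p₂)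
    (α₁ α₂ : F) (hα : α₁ ≠ α₂) (hα₁ : α₁ ≠ 0) (hα₂ : α₂ ≠ 0)
    (n : ℕ) (hn : p₁.natDegree + p₂.natDegree < n) :
    ∃ c h₁ h₂ : Polynomial F,
      c.natDegree = n ∧ h₁.Separable ∧ h₂.Separable ∧
      a = p₁ * h₁ + b * c * Polynomial.C α₁ ∧
      a = p₂ * h₂ + b * c * Polynomial.C α₂ ∧
      IsCoprime h₁ (a * p₁) ∧ IsCoprime h₂ (a * p₂) := by

  classical
  obtain ⟨u, v, huv⟩ := hp₁p₂
  obtain ⟨w₁, z₁, hw₁⟩ := hbp₁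
  obtain ⟨w₂, z₂, hw₂⟩ := hbp₂
  have hCα₁ : (C α₁ : Polynomial F) * C α₁⁻¹ = 1 := by
    rw [← C_mul, mul_inv_cancel₀ hα₁, C_1]
  have hCα₂ : (C α₂ : Polynomial F) * C α₂⁻¹ = 1 := by
    rw [← C_mul, mul_inv_cancel₀ hα₂, C_1]
  set c₁ : Polynomial F := a * (C α₁⁻¹ * w₁ * v * p₂ + C α₂⁻¹ * w₂ * u * p₁) with hc₁def
  have hd₁ : ∃ k, a - C α₁ * b * c₁ = p₁ * k := by
    refine ⟨a * (z₁ + u) - a * (z₁ * u * p₁) - C α₁ * C α₂⁻¹ * a * b * w₂ * u, ?_⟩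
    linear_combination (-(a * (1 - z₁ * p₁))) * huv + (-(a * v * p₂)) * hw₁ +
      (-(a * b * w₁ * v * p₂)) * hCα₁
  have hd₂ : ∃ k, a - C α₂ * b * c₁ = p₂ * k := by
    refine ⟨a * (z₂ + v) - a * (z₂ * v * p₂) - C α₂ * C α₁⁻¹ * a * b * w₁ * v, ?_⟩
    linear_combination (-(a * (1 - z₂ * p₂))) * huv + (-(a * u * p₁)) * hw₂ +
      (-(a * b * w₂ * u * p₁)) * hCα₂
  have hp12 : p₁ * p₂ ≠ 0 := mul_ne_zero hp₁ hp₂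
  set P : Polynomial F := (p₁ * p₂) * C ((p₁ * p₂).leadingCoeff)⁻¹ with hPdef
  have hPm : P.Monic := monic_mul_leadingCoeff_inv hp12
  have hdegP : P.degree = (p₁ * p₂).degree := degree_mul_leadingCoeff_inv _ hp12
  set c₂ : Polynomial F := c₁ %ₘ P with hc₂def
  have hd0 : ∃ d, c₁ - c₂ = (p₁ * p₂) * d := by
    refine ⟨C ((p₁ * p₂).leadingCoeff)⁻¹ * (c₁ /ₘ P), ?_⟩
    have h := Polynomial.modByMonic_add_div c₁ P
    linear_combination -h
  obtain ⟨d0, hd0⟩ := hd0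
  have hdegc₂ : c₂.degree < (p₁ * p₂).degree := hdegP ▸ Polynomial.degree_modByMonic_lt c₁ hPm
  -- choose γ so that both g's are nonzero
  have hfinγ : ({γ : F | a - C α₁ * b * (c₂ + C γ * (p₁ * p₂)) = 0} ∪
      {γ : F | a - C α₂ * b * (c₂ + C γ * (p₁ * p₂)) = 0}).Finite := by
    apply Set.Finite.union
    · apply Set.Subsingleton.finite
      intro x hx y hy
      simp only [Set.mem_setOf_eq] at hx hy
      have h0 : C α₁ * b * ((C y - C x) * (p₁ * p₂)) = 0 := by linear_combination hx - hy
      by_contra hne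
      exact (mul_ne_zero (mul_ne_zero (C_ne_zero.mpr hα₁) hb)
        (mul_ne_zero (sub_ne_zero.mpr (fun hc => hne ((C_injective hc).symm))) hp12)) h0
    · apply Set.Subsingleton.finite
      intro x hx y hy
      simp only [Set.mem_setOf_eq] at hx hy
      have h0 : C α₂ * b * ((C y - C x) * (p₁ * p₂)) = 0 := by linear_combination hx - hy
      by_contra hne
      exact (mul_ne_zero (mul_ne_zero (C_ne_zero.mpr hα₂) hb)
        (mul_ne_zero (sub_ne_zero.mpr (fun hc => hne ((C_injective hc).symm))) hp12)) h0
  obtain ⟨γ, hγ⟩ := hfinγ.exists_notMem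
  simp only [Set.mem_union, Set.mem_setOf_eq, not_or] at hγ
  obtain ⟨hγ₁, hγ₂⟩ := hγ
  set c₃ : Polynomial F := c₂ + C γ * (p₁ * p₂) with hc₃def
  obtain ⟨k₁, hk₁⟩ := hd₁
  obtain ⟨k₂, hk₂⟩ := hd₂
  have hg₁ : ∃ g, a - C α₁ * b * c₃ = p₁ * g := by
    refine ⟨k₁ + C α₁ * b * (p₂ * d0) - C α₁ * b * (C γ * p₂), ?_⟩
    linear_combination hk₁ + (C α₁ * b) * hd0
  have hg₂ : ∃ g, a - C α₂ * b * c₃ = p₂ * g := by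
    refine ⟨k₂ + C α₂ * b * (p₁ * d0) - C α₂ * b * (C γ * p₁), ?_⟩
    linear_combination hk₂ + (C α₂ * b) * hd0
  obtain ⟨g₁, hg₁⟩ := hg₁
  obtain ⟨g₂, hg₂⟩ := hg₂
  have hg₁0 : g₁ ≠ 0 := by
    intro h0
    exact hγ₁ (by rw [hg₁, h0, mul_zero])
  have hg₂0 : g₂ ≠ 0 := by
    intro h0
    exact hγ₂ (by rw [hg₂, h0, mul_zero])
  -- coprimality of g₁, g₂ with b and the other p
  have hg₁b : IsCoprime g₁ b := by
    have h1 : IsCoprime (a + b * (-(C α₁ * c₃))) b := hab.add_mul_left_left _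
    have h2 : p₁ * g₁ = a + b * (-(C α₁ * c₃)) := by linear_combination -hg₁
    rw [← h2] at h1
    exact h1.of_mul_left_right
  have hg₂b : IsCoprime g₂ b := by
    have h1 : IsCoprime (a + b * (-(C α₂ * c₃))) b := hab.add_mul_left_left _
    have h2 : p₂ * g₂ = a + b * (-(C α₂ * c₃)) := by linear_combination -hg₂
    rw [← h2] at h1
    exact h1.of_mul_left_right
  have hαu12 : (1 - α₁ * α₂⁻¹) ≠ 0 := by
    rw [sub_ne_zero]
    intro h
    exact hα ((mul_inv_eq_one₀ hα₂).mp h.symm)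
  have hαu21 : (1 - α₂ * α₁⁻¹) ≠ 0 := by
    rw [sub_ne_zero]
    intro h
    exact hα ((mul_inv_eq_one₀ hα₁).mp h.symm).symm
  have hCsplit₁ : (C (1 - α₁ * α₂⁻¹) : Polynomial F) = 1 - C α₁ * C α₂⁻¹ := by
    rw [map_sub, map_one, C_mul]
  have hCsplit₂ : (C (1 - α₂ * α₁⁻¹) : Polynomial F) = 1 - C α₂ * C α₁⁻¹ := by
    rw [map_sub, map_one, C_mul]
  have hg₁p₂ : IsCoprime g₁ p₂ := by
    have hu1 : IsUnit (C (1 - α₁ * α₂⁻¹) : Polynomial F) := isUnit_C.mpr hαu12.isUnit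
    have base : IsCoprime (C (1 - α₁ * α₂⁻¹) * a) p₂ :=
      (isCoprime_mul_unit_left_left hu1 _ _).mpr hap₂
    have h3 := base.add_mul_right_left (C α₁ * C α₂⁻¹ * g₂)
    have h2 : p₁ * g₁ = C (1 - α₁ * α₂⁻¹) * a + (C α₁ * C α₂⁻¹ * g₂) * p₂ := by
      linear_combination (-1 : Polynomial F) * hg₁ + (C α₁ * C α₂⁻¹) * hg₂ +
        (C α₁ * b * c₃) * hCα₂ - a * hCsplit₁
    rw [← h2] at h3
    exact h3.of_mul_left_right
  have hg₂p₁ : IsCoprime g₂ p₁ := by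
    have hu1 : IsUnit (C (1 - α₂ * α₁⁻¹) : Polynomial F) := isUnit_C.mpr hαu21.isUnit
    have base : IsCoprime (C (1 - α₂ * α₁⁻¹) * a) p₁ :=
      (isCoprime_mul_unit_left_left hu1 _ _).mpr hap₁
    have h3 := base.add_mul_right_left (C α₂ * C α₁⁻¹ * g₁)
    have h2 : p₂ * g₂ = C (1 - α₂ * α₁⁻¹) * a + (C α₂ * C α₁⁻¹ * g₁) * p₁ := by
      linear_combination (-1 : Polynomial F) * hg₂ + (C α₂ * C α₁⁻¹) * hg₁ +
        (C α₂ * b * c₃) * hCα₁ - a * hCsplit₂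
    rw [← h2] at h3
    exact h3.of_mul_left_right
  have hp12c : IsCoprime p₁ p₂ := ⟨u, v, huv⟩
  have hbp₁c : IsCoprime b p₁ := ⟨w₁, z₁, hw₁⟩
  have hbp₂c : IsCoprime b p₂ := ⟨w₂, z₂, hw₂⟩
  -- choose γs avoiding roots of N, then β
  have hN : a * p₁ * p₂ * g₁ * g₂ * b ≠ 0 :=
    mul_ne_zero (mul_ne_zero (mul_ne_zero (mul_ne_zero (mul_ne_zero ha hp₁) hp₂) hg₁0) hg₂0) hb
  obtain ⟨m', hm'⟩ : ∃ m', n = p₁.natDegree + p₂.natDegree + (m' + 1) :=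
    ⟨n - (p₁.natDegree + p₂.natDegree) - 1, by omega⟩
  obtain ⟨γs, hγs⟩ := (Polynomial.finite_setOf_isRoot hN).exists_notMem
  have hγsN : (a * p₁ * p₂ * g₁ * g₂ * b).eval γs ≠ 0 := hγs
  have hfinβ : ({x : F | (a * p₁ * p₂ * g₁ * g₂ * b).IsRoot x} ∪
      ({β : F | Polynomial.derivative ((b * p₂) * ((X - C γs) ^ m' * (X - C β))) = 0} ∪
       {β : F | Polynomial.derivative ((b * p₁) * ((X - C γs) ^ m' * (X - C β))) = 0})).Finite :=
    (Polynomial.finite_setOf_isRoot hN).union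
      (((deriv_bad_subsingleton _ (mul_ne_zero hb hp₂) γs m').finite).union
       ((deriv_bad_subsingleton _ (mul_ne_zero hb hp₁) γs m').finite))
  obtain ⟨β, hβ⟩ := hfinβ.exists_notMem
  simp only [Set.mem_union, Set.mem_setOf_eq, not_or] at hβ
  obtain ⟨hβN, hβ₁, hβ₂⟩ := hβ
  have hβN' : (a * p₁ * p₂ * g₁ * g₂ * b).eval β ≠ 0 := hβN
  set st : Polynomial F := (X - C γs) ^ m' * (X - C β) with hstdef
  have hsm : st.Monic := ((monic_X_sub_C γs).pow m').mul (monic_X_sub_C β)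
  have hs0 : st ≠ 0 := hsm.ne_zero
  have hsdeg : st.natDegree = m' + 1 := by
    rw [hstdef, natDegree_mul (pow_ne_zero _ (X_sub_C_ne_zero γs)) (X_sub_C_ne_zero β),
      natDegree_pow, natDegree_X_sub_C, natDegree_X_sub_C, mul_one]
  -- coprimality of st with polys not vanishing at γs, β
  have hsw : ∀ w : Polynomial F, w.eval γs ≠ 0 → w.eval β ≠ 0 → IsCoprime st w := by
    intro w h1 h2
    exact (coprime_linear_pow γs m' w h1).mul_left (coprime_linear β w h2)
  simp only [eval_mul, mul_ne_zero_iff] at hγsN hβN'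
  obtain ⟨⟨⟨⟨⟨haγ, hp₁γ⟩, hp₂γ⟩, hg₁γ⟩, hg₂γ⟩, hbγ⟩ := hγsN
  obtain ⟨⟨⟨⟨⟨haβ, hp₁β⟩, hp₂β⟩, hg₁β⟩, hg₂β⟩, hbβ⟩ := hβN'
  -- properties of f₁ = C α₁ * ((b * p₂) * st), f₂ = C α₂ * ((b * p₁) * st)
  have hcopg₁f₁ : IsCoprime g₁ (C α₁ * ((b * p₂) * st)) := by
    refine (isCoprime_mul_unit_left_right (isUnit_C.mpr hα₁.isUnit) _ _).mpr ?_
    exact (hg₁b.mul_right hg₁p₂).mul_right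
      ((hsw g₁ hg₁γ hg₁β).symm)
  have hcopg₂f₂ : IsCoprime g₂ (C α₂ * ((b * p₁) * st)) := by
    refine (isCoprime_mul_unit_left_right (isUnit_C.mpr hα₂.isUnit) _ _).mpr ?_
    exact (hg₂b.mul_right hg₂p₁).mul_right
      ((hsw g₂ hg₂γ hg₂β).symm)
  have hapn₁ : a * p₁ ≠ 0 := mul_ne_zero ha hp₁
  have hapn₂ : a * p₂ ≠ 0 := mul_ne_zero ha hp₂
  have hcopf₁ : IsCoprime (C α₁ * ((b * p₂) * st)) (a * p₁) := by
    refine (isCoprime_mul_unit_left_left (isUnit_C.mpr hα₁.isUnit) _ _).mpr ?_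
    refine IsCoprime.mul_left (IsCoprime.mul_left (hab.symm.mul_right hbp₁c)
      (hap₂.symm.mul_right hp12c.symm)) ?_
    exact hsw _ (by rw [eval_mul]; exact mul_ne_zero haγ hp₁γ)
      (by rw [eval_mul]; exact mul_ne_zero haβ hp₁β)
  have hcopf₂ : IsCoprime (C α₂ * ((b * p₁) * st)) (a * p₂) := by
    refine (isCoprime_mul_unit_left_left (isUnit_C.mpr hα₂.isUnit) _ _).mpr ?_
    refine IsCoprime.mul_left (IsCoprime.mul_left (hab.symm.mul_right hbp₂c)
      (hap₁.symm.mul_right hp12c)) ?_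
    exact hsw _ (by rw [eval_mul]; exact mul_ne_zero haγ hp₂γ)
      (by rw [eval_mul]; exact mul_ne_zero haβ hp₂β)
  have hf₁' : Polynomial.derivative (C α₁ * ((b * p₂) * st)) ≠ 0 := by
    rw [Polynomial.derivative_C_mul]
    exact mul_ne_zero (C_ne_zero.mpr hα₁) hβ₁
  have hf₂' : Polynomial.derivative (C α₂ * ((b * p₁) * st)) ≠ 0 := by
    rw [Polynomial.derivative_C_mul]
    exact mul_ne_zero (C_ne_zero.mpr hα₂) hβ₂
  -- choose l avoiding the bad sets
  have hB₁ := bad_finite (a * p₁) g₁ (C α₁ * ((b * p₂) * st)) hapn₁ hg₁0 hcopg₁f₁ hcopf₁ hf₁'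
  have hB₂ := bad_finite (a * p₂) g₂ (C α₂ * ((b * p₁) * st)) hapn₂ hg₂0 hcopg₂f₂ hcopf₂ hf₂'
  obtain ⟨l, hl⟩ := (hB₁.union (hB₂.union (Set.finite_singleton 0))).exists_notMem
  simp only [Set.mem_union, Set.mem_setOf_eq, Set.mem_singleton_iff, not_or, not_not] at hl
  obtain ⟨⟨hsep₁, hcop₁⟩, ⟨hsep₂, hcop₂⟩, hl0⟩ := hl
  refine ⟨c₃ + C l * (st * (p₁ * p₂)), g₁ - C l * (C α₁ * ((b * p₂) * st)),
    g₂ - C l * (C α₂ * ((b * p₁) * st)), ?_, hsep₁, hsep₂, ?_, ?_, hcop₁, hcop₂⟩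
  · -- degree computation
    have hsec0 : C l * (st * (p₁ * p₂)) ≠ 0 :=
      mul_ne_zero (C_ne_zero.mpr hl0) (mul_ne_zero hs0 hp12)
    have hdegsec : (C l * (st * (p₁ * p₂))).degree = (((m' + 1) + (p₁ * p₂).natDegree : ℕ) : ℕ) := by
      rw [degree_eq_natDegree hsec0, natDegree_C_mul hl0, natDegree_mul hs0 hp12, hsdeg]
    have hlt : c₃.degree < (C l * (st * (p₁ * p₂))).degree := by
      have h1 : c₃.degree ≤ (p₁ * p₂).degree := by
        refine (degree_add_le _ _).trans (max_le hdegc₂.le ?_)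
        refine (degree_mul_le _ _).trans ?_
        simpa using add_le_add_left (degree_C_le (a := γ)) ((p₁ * p₂).degree)
      refine h1.trans_lt ?_
      rw [hdegsec, degree_eq_natDegree hp12]
      exact_mod_cast (by omega : (p₁ * p₂).natDegree < (m' + 1) + (p₁ * p₂).natDegree)
    have hdegc : (c₃ + C l * (st * (p₁ * p₂))).degree = (((m' + 1) + (p₁ * p₂).natDegree : ℕ) : ℕ) := by
      rw [degree_add_eq_right_of_degree_lt hlt, hdegsec]
    refine (natDegree_eq_of_degree_eq_some hdegc).trans ?_
    rw [natDegree_mul hp₁ hp₂]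
    omega
  · linear_combination hg₁
  · linear_combination hg₂
end

section
/- Let n be a positive integer, let A be a transitive subgroup of the symmetric group S_n on n points, and let e be an integer with n/2 < e < n and gcd(e, n) = 1. If A contains an e-cycle (a cycle whose support has exactly e points), then A is primitive. If moreover A contains a transposition, then A = S_n. -/
open MulAction Set Equiv Pointwise

/-- a transitive subgroup `A ≤ S_n` containing an `e`-cycle, where
`n/2 < e < n` and `gcd(e,n) = 1`, is primitive (every block of its action is trivial);
if moreover `A` contains a transposition, then `A = S_n`. -/
theorem primitive_of_cycle_and_eq_top_of_swap
    (n : ℕ) (A : Subgroup (Equiv.Perm (Fin n)))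
    (htrans : MulAction.IsPretransitive A (Fin n))
    (e : ℕ) (he₁ : n < 2 * e) (he₂ : e < n) (hcop : Nat.Coprime e n)
    (σ : Equiv.Perm (Fin n)) (hσA : σ ∈ A) (hcyc : σ.IsCycle)
    (hsupp : σ.support.card = e) :
    (∀ B : Set (Fin n), MulAction.IsBlock A B → MulAction.IsTrivialBlock B) ∧
    ((∃ τ ∈ A, τ.IsSwap) → A = ⊤) := by
  have hcardX : Nat.card (Fin n) = n := by simp
  set s : Set (Fin n) := ↑σ.support with hs_def
  have hscard : s.ncard = e := by
    rw [hs_def, Set.ncard_coe_finset, hsupp]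
  -- any block containing the support is univ
  have huniv : ∀ C : Set (Fin n), MulAction.IsBlock A C → s ⊆ C → C = Set.univ := by
    intro C hC hsC
    apply hC.eq_univ_of_card_lt
    have h1 : e ≤ C.ncard := by
      rw [← hscard]
      exact Set.ncard_le_ncard hsC (Set.toFinite C)
    rw [hcardX]
    omega
  have part1 : ∀ B : Set (Fin n), MulAction.IsBlock A B → MulAction.IsTrivialBlock B := by
    intro B hB
    by_cases hsub : B.Subsingleton
    · exact Or.inl hsub
    right
    rw [Set.not_subsingleton_iff] at hsub
    obtain ⟨x0, hx0, y0, hy0, hxy0⟩ := hsub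
    have hBne : B.Nonempty := ⟨x0, hx0⟩
    have hb2 : 2 ≤ B.ncard := (Set.one_lt_ncard (Set.toFinite B)).mpr ⟨x0, hx0, y0, hy0, hxy0⟩
    have hbdvd : B.ncard ∣ n := by
      have := hB.ncard_dvd_card hBne
      rwa [hcardX] at this
    -- Case: some translate contains the support
    by_cases hbig : ∃ g : A, s ⊆ g • B
    · obtain ⟨g, hg⟩ := hbig
      have hgBuniv : g • B = Set.univ := huniv _ (hB.translate g) hg
      have : B = g⁻¹ • (g • B) := by rw [inv_smul_smul]
      rw [this, hgBuniv, Set.smul_set_univ]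
    · exfalso
      -- every translate is inside s or disjoint from s
      have hdich : ∀ g : A, (g • B) ⊆ s ∨ Disjoint (g • B) s := by
        intro g
        by_cases hfix : ∃ a ∈ g • B, a ∉ s
        · right
          obtain ⟨a, haB, haf⟩ := hfix
          have hgB : MulAction.IsBlock A (g • B) := hB.translate g
          have hσa : (⟨σ, hσA⟩ : A) • a = a := by
            show σ a = a
            exact Equiv.Perm.notMem_support.mp (by simpa [hs_def] using haf)
          have hstab : (⟨σ, hσA⟩ : A) • (g • B) = g • B :=
            hgB.smul_eq_of_mem haB (by rw [hσa]; exact haB)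
          have hstabz : ∀ k : ℤ, ((⟨σ, hσA⟩ : A) ^ k) • (g • B) = g • B := by
            intro k
            have : (⟨σ, hσA⟩ : A) ∈ MulAction.stabilizer A (g • B) := hstab
            exact (MulAction.stabilizer A (g • B)).zpow_mem this k
          rw [Set.disjoint_right]
          intro y hys hyB
          apply hbig
          refine ⟨g, fun z hz => ?_⟩
          have hyne : σ y ≠ y := Equiv.Perm.mem_support.mp (by simpa [hs_def] using hys)
          have hzne : σ z ≠ z := Equiv.Perm.mem_support.mp (by simpa [hs_def] using hz)
          obtain ⟨k, hk⟩ := hcyc.exists_zpow_eq hyne hzne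
          have : ((⟨σ, hσA⟩ : A) ^ k) • y = z := by
            simp only [← hk]
            rfl
          rw [← this, ← hstabz k]
          exact Set.smul_mem_smul_set hyB
        · left
          intro a haB
          by_contra h
          exact hfix ⟨a, haB, h⟩
      -- choose a translate through each point
      have hcover : ∀ x : Fin n, ∃ g : A, x ∈ g • B := by
        intro x
        obtain ⟨g, hg⟩ := htrans.exists_smul_eq x0 x
        exact ⟨g, hg ▸ Set.smul_mem_smul_set hx0⟩
      choose gg hgg using hcover
      -- equal-or-disjoint for translates
      have heqd : ∀ x y : Fin n, y ∈ gg x • B → gg y • B = gg x • B := by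
        intro x y hy
        by_contra h
        have := hB h
        exact Set.disjoint_left.mp this (hgg y) hy
      classical
      set f : Fin n → Finset (Fin n) := fun x => (Set.toFinite (gg x • B)).toFinset with hf_def
      have hfmem : ∀ x y : Fin n, y ∈ f x ↔ y ∈ gg x • B := by
        intro x y; simp only [hf_def, Set.Finite.mem_toFinset]
      have hfcard : ∀ x, (f x).card = B.ncard := by
        intro x
        have h1 : (f x).card = (gg x • B).ncard :=
          (Set.ncard_eq_toFinset_card _ (Set.toFinite _)).symm
        rw [h1, Set.ncard_smul_set]
      -- fibers over the support
      have hcardsum : σ.support.card =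
          ∑ C ∈ σ.support.image f, (σ.support.filter (fun x => f x = C)).card :=
        Finset.card_eq_sum_card_fiberwise (fun x hx => Finset.mem_image_of_mem f hx)
      have hfib : ∀ C ∈ σ.support.image f, (σ.support.filter (fun x => f x = C)).card = B.ncard := by
        intro C hC
        obtain ⟨x, hxs, rfl⟩ := Finset.mem_image.mp hC
        have hsubs : ∀ y, y ∈ f x → y ∈ σ.support := by
          intro y hy
          rcases hdich (gg x) with hin | hdisj
          · exact hin ((hfmem x y).mp hy)
          · exact absurd (hgg x) (Set.disjoint_left.mp hdisj · (by simpa [hs_def] using hxs))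
        have hfilter : σ.support.filter (fun y => f y = f x) = f x := by
          ext y
          simp only [Finset.mem_filter]
          constructor
          · rintro ⟨hys, hfy⟩
            rw [← hfy, hfmem]
            exact hgg y
          · intro hy
            refine ⟨hsubs y hy, ?_⟩
            have : gg y • B = gg x • B := heqd x y ((hfmem x y).mp hy)
            simp only [hf_def]
            congr 1

        rw [hfilter, hfcard]
      have hdvd_e : B.ncard ∣ e := by
        rw [← hsupp, hcardsum, Finset.sum_congr rfl hfib, Finset.sum_const, smul_eq_mul]
        exact Dvd.intro_left _ rfl
      have : B.ncard ∣ 1 := hcop ▸ Nat.dvd_gcd hdvd_e hbdvd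
      rw [Nat.dvd_one] at this
      omega
  refine ⟨part1, ?_⟩
  rintro ⟨τ, hτA, hτ⟩
  obtain ⟨a, b, hab, rfl⟩ := hτ
  classical
  set R : Fin n → Fin n → Prop := fun x y => x = y ∨ Equiv.swap x y ∈ A with hR_def
  have Rsymm : ∀ x y, R x y → R y x := by
    rintro x y (rfl | h)
    · exact Or.inl rfl
    · right; rwa [Equiv.swap_comm]
  have Rtrans : ∀ x y z, R x y → R y z → R x z := by
    rintro x y z (rfl | hxy) h
    · exact h
    rcases h with rfl | hyz
    · exact Or.inr hxy
    by_cases hxz : x = z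
    · exact Or.inl hxz
    right
    by_cases hxy' : x = y
    · subst hxy'; exact hyz
    by_cases hyz' : y = z
    · subst hyz'; exact hxy
    have key : Equiv.swap y z * Equiv.swap x y * Equiv.swap y z = Equiv.swap z x :=
      Equiv.swap_mul_swap_mul_swap hxy' hxz
    have : Equiv.swap z x ∈ A := key ▸ A.mul_mem (A.mul_mem hyz hxy) hyz
    rwa [Equiv.swap_comm]
  have Rconj : ∀ g : Equiv.Perm (Fin n), g ∈ A → ∀ x y, R x y → R (g x) (g y) := by
    rintro g hg x y (rfl | h)
    · exact Or.inl rfl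
    · right
      rw [Equiv.swap_apply_apply]
      exact A.mul_mem (A.mul_mem hg h) (A.inv_mem hg)
  set C : Set (Fin n) := {x | R a x} with hC_def
  have hblock : MulAction.IsBlock A C := by
    rw [MulAction.isBlock_iff_smul_eq_or_disjoint]
    intro g
    by_cases hdis : Disjoint (g • C) C
    · exact Or.inr hdis
    left
    obtain ⟨z, hz1, hz2⟩ := Set.not_disjoint_iff.mp hdis
    obtain ⟨w, hw, hwz⟩ := hz1
    have hgw : (g : Equiv.Perm (Fin n)) w = z := hwz
    have hga : R a ((g : Equiv.Perm (Fin n)) a) := by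
      have h1 : R ((g : Equiv.Perm (Fin n)) a) z := hgw ▸ Rconj g g.2 a w hw
      exact Rtrans a z _ hz2 (Rsymm _ _ h1)
    ext y
    constructor
    · rintro ⟨x, hx, rfl⟩
      exact Rtrans a _ _ hga (Rconj g g.2 a x hx)
    · intro hy
      refine ⟨(g : Equiv.Perm (Fin n))⁻¹ y, ?_, by
        show (g : Equiv.Perm (Fin n)) ((g : Equiv.Perm (Fin n))⁻¹ y) = y
        simp⟩
      have h1 : R ((g : Equiv.Perm (Fin n)) a) y := Rtrans _ a y (Rsymm _ _ hga) hy
      have h2 := Rconj _ (A.inv_mem g.2) _ _ h1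
      show R a _
      simpa using h2
  have hCuniv : C = Set.univ := by
    rcases part1 C hblock with h | h
    · exact absurd (h (Or.inl rfl : R a a) (Or.inr hτA : R a b)) hab
    · exact h
  have hswap : ∀ x y : Fin n, x ≠ y → Equiv.swap x y ∈ A := by
    intro x y hxy
    have hax : R a x := by
      have : x ∈ C := hCuniv ▸ Set.mem_univ x
      exact this
    have hay : R a y := by
      have : y ∈ C := hCuniv ▸ Set.mem_univ y
      exact this
    rcases Rtrans x a y (Rsymm a x hax) hay with h | h
    · exact absurd h hxy
    · exact h
  rw [eq_top_iff, ← Equiv.Perm.closure_isSwap]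
  rw [Subgroup.closure_le]
  rintro π ⟨x, y, hxy, rfl⟩
  exact hswap x y hxy
end
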